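/- Let G be the 9-cycle with vertices v_0,...,v_8 (labelled cyclically), S = {v_0, v_3}, A = {v_1, v_2, v_4, v_8} the set of neighbours of S, and B = {v_5, v_6, v_7} the non-neighbours of S. The Droogendijk graph G* built from these data has 18 vertices and chromatic number 3 (not 4). -/

import Mathlib

set_option linter.unreachableTactic false
set_option linter.unusedTactic false
set_option linter.unnecessarySeqFocus false

/-- The set `A` of neighbours of the independent set `S` in `G`. -/
def droogA {V : Type} (G : SimpleGraph V) (S : Set V) : Set V :=
  {v : V | v ∉ S ∧ ∃ w ∈ S, G.Adj v w}

/-- The set `B` of non-neighbours of `S` in `G` (outside `S`). -/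
def droogB {V : Type} (G : SimpleGraph V) (S : Set V) : Set V :=
  {v : V | v ∉ S ∧ ∀ w ∈ S, ¬ G.Adj v w}

/-- Vertex type of the Droogendijk graph `G*`: the original vertices, copies `A'` and `B'`
of `A` and `B`, and the two new vertices `α` (coded `false`) and `β` (coded `true`). -/
abbrev DroogVertex {V : Type} (G : SimpleGraph V) (S : Set V) : Type :=
  V ⊕ ((droogA G S ⊕ droogB G S) ⊕ Bool)

/-- The vertex `α` of `G*`. -/
def droogAlpha {V : Type} (G : SimpleGraph V) (S : Set V) : DroogVertex G S :=
  Sum.inr (Sum.inr false)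

/-- The vertex `β` of `G*`. -/
def droogBeta {V : Type} (G : SimpleGraph V) (S : Set V) : DroogVertex G S :=
  Sum.inr (Sum.inr true)

/-- Adjacency of the Droogendijk graph `G*`: `G` on the original vertices, each copy vertex
joined to the `G`-neighbours of its original, `α` joined to `S ∪ B'`, and `β` joined to
`A' ∪ B'`. -/
def droogAdj {V : Type} (G : SimpleGraph V) (S : Set V) :
    DroogVertex G S → DroogVertex G S → Prop
  | Sum.inl x, Sum.inl y => G.Adj x y
  | Sum.inl x, Sum.inr (Sum.inl (Sum.inl a)) => G.Adj x a.1
  | Sum.inr (Sum.inl (Sum.inl a)), Sum.inl x => G.Adj x a.1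
  | Sum.inl x, Sum.inr (Sum.inl (Sum.inr b)) => G.Adj x b.1
  | Sum.inr (Sum.inl (Sum.inr b)), Sum.inl x => G.Adj x b.1
  | Sum.inl x, Sum.inr (Sum.inr false) => x ∈ S
  | Sum.inr (Sum.inr false), Sum.inl x => x ∈ S
  | Sum.inr (Sum.inl (Sum.inl _)), Sum.inr (Sum.inr true) => True
  | Sum.inr (Sum.inr true), Sum.inr (Sum.inl (Sum.inl _)) => True
  | Sum.inr (Sum.inl (Sum.inr _)), Sum.inr (Sum.inr _) => True
  | Sum.inr (Sum.inr _), Sum.inr (Sum.inl (Sum.inr _)) => True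
  | _, _ => False

/-- The Droogendijk graph `G*` built from `G` and the independent set `S`. -/
def droog {V : Type} (G : SimpleGraph V) (S : Set V) : SimpleGraph (DroogVertex G S) where
  Adj := droogAdj G S
  symm := by
    constructor
    rintro (x | ((a | b) | (_ | _))) (y | ((a' | b') | (_ | _))) h <;>
      simp only [droogAdj] at h ⊢ <;> first | exact G.adj_symm h | exact h | trivial
  loopless := by
    constructor
    rintro (x | ((a | b) | (_ | _))) h <;> simp only [droogAdj] at h <;>
      first | exact G.irrefl h | exact h | exact h.elim

/-- The 9-cycle. -/
def C9 : SimpleGraph (Fin 9) where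
  Adj i j := j = i + 1 ∨ i = j + 1
  symm := by constructor; decide
  loopless := by constructor; decide

/-- The independent set `S = {v₀, v₃}` of the 9-cycle. -/
def S9 : Set (Fin 9) := {0, 3}

instance S9.decMem : DecidablePred (· ∈ S9) := fun v =>
  decidable_of_iff (v = 0 ∨ v = 3) (by simp [S9])

instance C9.decAdj : DecidableRel C9.Adj := fun i j =>
  inferInstanceAs (Decidable (j = i + 1 ∨ i = j + 1))

instance droogA9.decMem : DecidablePred (· ∈ droogA C9 S9) := fun v =>
  decidable_of_iff (v ∉ S9 ∧ (C9.Adj v 0 ∨ C9.Adj v 3)) (by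
    simp only [droogA, S9, Set.mem_setOf_eq, Set.mem_insert_iff, Set.mem_singleton_iff]
    constructor
    · rintro ⟨h1, (h | h)⟩
      · exact ⟨h1, 0, Or.inl rfl, h⟩
      · exact ⟨h1, 3, Or.inr rfl, h⟩
    · rintro ⟨h1, w, (rfl | rfl), h⟩
      · exact ⟨h1, Or.inl h⟩
      · exact ⟨h1, Or.inr h⟩)

instance droogB9.decMem : DecidablePred (· ∈ droogB C9 S9) := fun v =>
  decidable_of_iff (v ∉ S9 ∧ (¬ C9.Adj v 0 ∧ ¬ C9.Adj v 3)) (by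
    simp only [droogB, S9, Set.mem_setOf_eq, Set.mem_insert_iff, Set.mem_singleton_iff]
    constructor
    · rintro ⟨h1, h2, h3⟩
      exact ⟨h1, by rintro w (rfl | rfl) <;> assumption⟩
    · rintro ⟨h1, h⟩
      exact ⟨h1, h 0 (Or.inl rfl), h 3 (Or.inr rfl)⟩)

instance droogAdj9.dec : DecidableRel (droogAdj C9 S9) := fun u v =>
  match u, v with
  | Sum.inl x, Sum.inl y => inferInstanceAs (Decidable (C9.Adj x y))
  | Sum.inl x, Sum.inr (Sum.inl (Sum.inl a)) => inferInstanceAs (Decidable (C9.Adj x a.1))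
  | Sum.inr (Sum.inl (Sum.inl a)), Sum.inl x => inferInstanceAs (Decidable (C9.Adj x a.1))
  | Sum.inl x, Sum.inr (Sum.inl (Sum.inr b)) => inferInstanceAs (Decidable (C9.Adj x b.1))
  | Sum.inr (Sum.inl (Sum.inr b)), Sum.inl x => inferInstanceAs (Decidable (C9.Adj x b.1))
  | Sum.inl x, Sum.inr (Sum.inr false) => inferInstanceAs (Decidable (x ∈ S9))
  | Sum.inr (Sum.inr false), Sum.inl x => inferInstanceAs (Decidable (x ∈ S9))
  | Sum.inl _, Sum.inr (Sum.inr true) => inferInstanceAs (Decidable False)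
  | Sum.inr (Sum.inr true), Sum.inl _ => inferInstanceAs (Decidable False)
  | Sum.inr (Sum.inl (Sum.inl _)), Sum.inr (Sum.inr true) => inferInstanceAs (Decidable True)
  | Sum.inr (Sum.inr true), Sum.inr (Sum.inl (Sum.inl _)) => inferInstanceAs (Decidable True)
  | Sum.inr (Sum.inl (Sum.inr _)), Sum.inr (Sum.inr false) => inferInstanceAs (Decidable True)
  | Sum.inr (Sum.inl (Sum.inr _)), Sum.inr (Sum.inr true) => inferInstanceAs (Decidable True)
  | Sum.inr (Sum.inr false), Sum.inr (Sum.inl (Sum.inr _)) => inferInstanceAs (Decidable True)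
  | Sum.inr (Sum.inr true), Sum.inr (Sum.inl (Sum.inr _)) => inferInstanceAs (Decidable True)
  | Sum.inr (Sum.inl (Sum.inl _)), Sum.inr (Sum.inr false) => inferInstanceAs (Decidable False)
  | Sum.inr (Sum.inr false), Sum.inr (Sum.inl (Sum.inl _)) => inferInstanceAs (Decidable False)
  | Sum.inr (Sum.inl (Sum.inl _)), Sum.inr (Sum.inl (Sum.inl _)) => inferInstanceAs (Decidable False)
  | Sum.inr (Sum.inl (Sum.inl _)), Sum.inr (Sum.inl (Sum.inr _)) => inferInstanceAs (Decidable False)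
  | Sum.inr (Sum.inl (Sum.inr _)), Sum.inr (Sum.inl (Sum.inl _)) => inferInstanceAs (Decidable False)
  | Sum.inr (Sum.inl (Sum.inr _)), Sum.inr (Sum.inl (Sum.inr _)) => inferInstanceAs (Decidable False)
  | Sum.inr (Sum.inr false), Sum.inr (Sum.inr false) => inferInstanceAs (Decidable False)
  | Sum.inr (Sum.inr false), Sum.inr (Sum.inr true) => inferInstanceAs (Decidable False)
  | Sum.inr (Sum.inr true), Sum.inr (Sum.inr false) => inferInstanceAs (Decidable False)
  | Sum.inr (Sum.inr true), Sum.inr (Sum.inr true) => inferInstanceAs (Decidable False)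

instance droog9.decAdj : DecidableRel (droog C9 S9).Adj := droogAdj9.dec

/-- A 3-coloring of the Droogendijk graph of the 9-cycle. -/
def dcol : DroogVertex C9 S9 → Fin 3
  | Sum.inl x => ![0, 1, 0, 1, 2, 0, 2, 0, 2] x
  | Sum.inr (Sum.inl (Sum.inl a)) => ![0, 1, 2, 0, 2, 0, 0, 0, 1] a.1
  | Sum.inr (Sum.inl (Sum.inr _)) => 1
  | Sum.inr (Sum.inr false) => 2
  | Sum.inr (Sum.inr true) => 0

lemma dcol_valid : ∀ u v : DroogVertex C9 S9, (droog C9 S9).Adj u v → dcol u ≠ dcol v := by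
  decide

lemma droog9_colorable3 : (droog C9 S9).Colorable 3 :=
  ⟨SimpleGraph.Coloring.mk dcol (fun {u v} h => dcol_valid u v h)⟩

lemma droog9_not_colorable2 : ¬ (droog C9 S9).Colorable 2 := by
  rintro ⟨c⟩
  have h : ∀ i j : Fin 9, C9.Adj i j → c (Sum.inl i) ≠ c (Sum.inl j) := fun i j hij =>
    c.valid (show droogAdj C9 S9 (Sum.inl i) (Sum.inl j) from hij)
  have t : ∀ a b d : Fin 2, a ≠ b → b ≠ d → a = d := by decide
  have h01 := h 0 1 (by decide)
  have h12 := h 1 2 (by decide)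
  have h23 := h 2 3 (by decide)
  have h34 := h 3 4 (by decide)
  have h45 := h 4 5 (by decide)
  have h56 := h 5 6 (by decide)
  have h67 := h 6 7 (by decide)
  have h78 := h 7 8 (by decide)
  have h80 := h 8 0 (by decide)
  have e02 := t _ _ _ h01 h12
  have e24 := t _ _ _ h23 h34
  have e46 := t _ _ _ h45 h56
  have e68 := t _ _ _ h67 h78
  exact h80 ((e02.trans (e24.trans (e46.trans e68))).symm)

/-- For the 9-cycle `G` with `S = {v₀, v₃}` (so `A = {v₁, v₂, v₄, v₈}` and
`B = {v₅, v₆, v₇}`), the Droogendijk graph `G*` has 18 vertices and chromatic number 3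
(not 4). -/
theorem stmt_10 :
    droogA C9 S9 = {1, 2, 4, 8} ∧ droogB C9 S9 = {5, 6, 7} ∧
    Nat.card (DroogVertex C9 S9) = 18 ∧
    (droog C9 S9).chromaticNumber = 3 ∧ (droog C9 S9).chromaticNumber ≠ 4 := by
  have hchi : (droog C9 S9).chromaticNumber = 3 := by
    refine le_antisymm ?_ ?_
    · simpa using droog9_colorable3.chromaticNumber_le
    · have h2 : ¬ (droog C9 S9).chromaticNumber ≤ 2 := by
        rw [show (2 : ℕ∞) = ((2 : ℕ) : ℕ∞) from rfl,
          SimpleGraph.chromaticNumber_le_iff_colorable]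
        exact droog9_not_colorable2
      have := Order.add_one_le_of_lt (not_le.mp h2)
      rw [show (2 : ℕ∞) + 1 = 3 by norm_num] at this
      exact this
  refine ⟨?_, ?_, ?_, hchi, ?_⟩
  · ext v
    simp only [Set.mem_insert_iff, Set.mem_singleton_iff]
    revert v
    decide
  · ext v
    simp only [Set.mem_insert_iff, Set.mem_singleton_iff]
    revert v
    decide
  · rw [Nat.card_eq_fintype_card]
    decide
  · rw [hchi]
    decide
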